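/- Let (B, 𝔼, 𝔰) be an extriangulated category and let A ↣ B ↠ C be an 𝔼-triangle realizing δ ∈ 𝔼(C, A). Then for every object Y of B, the sequence B(Y,A) → B(Y,B) → B(Y,C) → 𝔼(Y,A) → 𝔼(Y,B) → 𝔼(Y,C), where the first two maps are postcomposition with the inflation and deflation, the middle map sends g to g^*δ, and the last two maps are 𝔼 applied covariantly, is exact. -/

import Mathlib

open CategoryTheory Category Limits Opposite ZeroObject

universe v u

namespace ExtStmt

variable (B : Type u) [Category.{v} B] [Preadditive B] [HasZeroObject B] [HasBinaryBiproducts B]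

/-- An extriangulated category structure on an additive category `B`,
following Nakaoka–Palu. `E` is the biadditive extension bifunctor, and `Real δ X a b`
expresses that the sequence `A ⟶ X ⟶ C` (given by `a`, `b`) belongs to the equivalence
class `𝔰(δ)`, i.e. realizes the extension `δ ∈ 𝔼(C, A)`. -/
structure Extriangulated where
  /-- The extension bifunctor `𝔼 : Bᵒᵖ × B ⥤ Ab`. -/
  E : Bᵒᵖ ⥤ B ⥤ AddCommGrpCat.{v}
  /-- `𝔼(C, -)` is additive. -/
  addE₁ : ∀ C : Bᵒᵖ, (E.obj C).Additive
  /-- `𝔼(-, A)` is additive. -/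
  addE₂ : ∀ A : B, (E.flip.obj A).Additive
  /-- The realization: `Real δ X a b` means `A ⟶ X ⟶ C` realizes `δ ∈ 𝔼(C, A)`. -/
  Real : ∀ {A C : B}, ((E.obj (op C)).obj A) → ∀ (X : B), (A ⟶ X) → (X ⟶ C) → Prop
  /-- Every extension is realized by some sequence. -/
  real_ex : ∀ {A C : B} (δ : (E.obj (op C)).obj A),
    ∃ (X : B) (a : A ⟶ X) (b : X ⟶ C), Real δ X a b
  /-- `𝔰(δ)` is closed under the equivalence of sequences. -/
  real_iso : ∀ {A C X X' : B} (δ : (E.obj (op C)).obj A) (a : A ⟶ X) (b : X ⟶ C) (i : X ≅ X'),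
    Real δ X a b → Real δ X' (a ≫ i.hom) (i.inv ≫ b)
  /-- Any two realizations of `δ` are equivalent sequences. -/
  real_unique : ∀ {A C X X' : B} (δ : (E.obj (op C)).obj A) (a : A ⟶ X) (b : X ⟶ C)
    (a' : A ⟶ X') (b' : X' ⟶ C), Real δ X a b → Real δ X' a' b' →
    ∃ i : X ≅ X', a ≫ i.hom = a' ∧ i.hom ≫ b' = b
  /-- Realization of morphisms of extensions: if `f_*δ = h^*δ'` then the pair `(f, h)` is
  realized by some `(f, g, h)`. -/
  real_mor : ∀ {A C A' C' X X' : B} (δ : (E.obj (op C)).obj A) (δ' : (E.obj (op C')).obj A')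
    (f : A ⟶ A') (h : C ⟶ C') (a : A ⟶ X) (b : X ⟶ C) (a' : A' ⟶ X') (b' : X' ⟶ C'),
    Real δ X a b → Real δ' X' a' b' →
    ((E.obj (op C)).map f) δ = ((E.map h.op).app A') δ' →
    ∃ g : X ⟶ X', a ≫ g = f ≫ a' ∧ g ≫ b' = b ≫ h
  /-- Additivity of the realization: `0` is realized by the split sequence. -/
  real_zero : ∀ (A C : B),
    Real (0 : (E.obj (op C)).obj A) (A ⊞ C) biprod.inl biprod.snd
  /-- Additivity of the realization: direct sums. -/
  real_sum : ∀ {A C A' C' X X' : B} (δ : (E.obj (op C)).obj A) (δ' : (E.obj (op C')).obj A')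
    (a : A ⟶ X) (b : X ⟶ C) (a' : A' ⟶ X') (b' : X' ⟶ C'),
    Real δ X a b → Real δ' X' a' b' →
    Real (((E.map (biprod.fst : C ⊞ C' ⟶ C).op).app (A ⊞ A'))
            (((E.obj (op C)).map (biprod.inl : A ⟶ A ⊞ A')) δ)
          + ((E.map (biprod.snd : C ⊞ C' ⟶ C').op).app (A ⊞ A'))
            (((E.obj (op C')).map (biprod.inr : A' ⟶ A ⊞ A')) δ'))
      (X ⊞ X') (biprod.map a a') (biprod.map b b')
  /-- Axiom (ET3). -/
  et3 : ∀ {A C A' C' X X' : B} (δ : (E.obj (op C)).obj A) (δ' : (E.obj (op C')).obj A')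
    (a : A ⟶ X) (b : X ⟶ C) (a' : A' ⟶ X') (b' : X' ⟶ C') (f : A ⟶ A') (g : X ⟶ X'),
    Real δ X a b → Real δ' X' a' b' → a ≫ g = f ≫ a' →
    ∃ h : C ⟶ C', g ≫ b' = b ≫ h ∧ ((E.obj (op C)).map f) δ = ((E.map h.op).app A') δ'
  /-- Axiom (ET3ᵒᵖ). -/
  et3op : ∀ {A C A' C' X X' : B} (δ : (E.obj (op C)).obj A) (δ' : (E.obj (op C')).obj A')
    (a : A ⟶ X) (b : X ⟶ C) (a' : A' ⟶ X') (b' : X' ⟶ C') (g : X ⟶ X') (h : C ⟶ C'),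
    Real δ X a b → Real δ' X' a' b' → g ≫ b' = b ≫ h →
    ∃ f : A ⟶ A', a ≫ g = f ≫ a' ∧ ((E.obj (op C)).map f) δ = ((E.map h.op).app A') δ'
  /-- Axiom (ET4). -/
  et4 : ∀ {A B₀ D C₀ F : B} (δ : (E.obj (op D)).obj A) (δ' : (E.obj (op F)).obj B₀)
    (a : A ⟶ B₀) (a' : B₀ ⟶ D) (bb : B₀ ⟶ C₀) (b' : C₀ ⟶ F),
    Real δ B₀ a a' → Real δ' C₀ bb b' →
    ∃ (E₀ : B) (c' : C₀ ⟶ E₀) (δ'' : (E.obj (op E₀)).obj A) (d : D ⟶ E₀) (e : E₀ ⟶ F),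
      Real δ'' C₀ (a ≫ bb) c' ∧
      Real (((E.obj (op F)).map a') δ') E₀ d e ∧
      a' ≫ d = bb ≫ c' ∧ c' ≫ e = b' ∧
      ((E.map d.op).app A) δ'' = δ ∧
      ((E.obj (op E₀)).map a) δ'' = ((E.map e.op).app B₀) δ'
  /-- Axiom (ET4ᵒᵖ). -/
  et4op : ∀ {A C₀ E₀ D F : B} (δ'' : (E.obj (op E₀)).obj A) (θ : (E.obj (op F)).obj D)
    (c : A ⟶ C₀) (c' : C₀ ⟶ E₀) (d : D ⟶ E₀) (e : E₀ ⟶ F),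
    Real δ'' C₀ c c' → Real θ E₀ d e →
    ∃ (B₀ : B) (a : A ⟶ B₀) (a' : B₀ ⟶ D) (bb : B₀ ⟶ C₀)
      (δ : (E.obj (op D)).obj A) (δ' : (E.obj (op F)).obj B₀),
      Real δ B₀ a a' ∧ Real δ' C₀ bb (c' ≫ e) ∧
      a ≫ bb = c ∧ a' ≫ d = bb ≫ c' ∧
      θ = ((E.obj (op F)).map a') δ' ∧
      ((E.map d.op).app A) δ'' = δ ∧
      ((E.obj (op E₀)).map a) δ'' = ((E.map e.op).app B₀) δ'

variable {B}

/-- The group of extensions `𝔼(C, A)`. -/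
abbrev Extriangulated.Ext (T : Extriangulated B) (C A : B) : Type v :=
  (T.E.obj (op C)).obj A

/-- `f_*δ`, the pushforward of an extension along `f : A ⟶ A'`. -/
abbrev Extriangulated.push (T : Extriangulated B) {C A A' : B} (f : A ⟶ A')
    (δ : T.Ext C A) : T.Ext C A' :=
  ((T.E.obj (op C)).map f) δ

/-- `g^*δ`, the pullback of an extension along `g : C ⟶ C'`. -/
abbrev Extriangulated.pull (T : Extriangulated B) {C C' A : B} (g : C ⟶ C')
    (δ : T.Ext C' A) : T.Ext C A :=
  ((T.E.map g.op).app A) δ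

/-- A pair of composable morphisms is a conflation if it realizes some extension. -/
def Extriangulated.IsConflation (T : Extriangulated B) {A X C : B}
    (a : A ⟶ X) (b : X ⟶ C) : Prop :=
  ∃ δ : T.Ext C A, T.Real δ X a b


set_option linter.unusedSectionVars false

section Hearts

variable {B : Type u} [Category.{v} B] [Preadditive B] [HasZeroObject B] [HasBinaryBiproducts B]

def wRel (Wp : B → Prop) (P : B → Prop) : HomRel (ObjectProperty.FullSubcategory P) :=
  fun {X Y} f g =>
    ∃ (Wo : B) (_ : Wp Wo) (p : X.obj ⟶ Wo) (q : Wo ⟶ Y.obj), p ≫ q = (f - g).hom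

abbrev HeartCat (Wp : B → Prop) (P : B → Prop) := CategoryTheory.Quotient (wRel Wp P)

theorem wRel_congruence (Wp P : B → Prop) (hW0 : Wp (0 : B))
    (hWbi : ∀ {X Y : B}, Wp X → Wp Y → Wp (X ⊞ Y)) : Congruence (wRel Wp P) where
  equivalence := by
    refine fun {X Y} => ⟨?_, ?_, ?_⟩
    · intro f
      exact ⟨0, hW0, 0, 0, by rw [sub_self]; simp⟩
    · rintro f g ⟨Wo, hw, p, q, h⟩
      exact ⟨Wo, hw, -p, q, by
        rw [Preadditive.neg_comp, h]; change -(f.hom - g.hom) = g.hom - f.hom; abel⟩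
    · rintro f g h ⟨W₁, hw₁, p₁, q₁, h₁⟩ ⟨W₂, hw₂, p₂, q₂, h₂⟩
      exact ⟨W₁ ⊞ W₂, hWbi hw₁ hw₂, biprod.lift p₁ p₂, biprod.desc q₁ q₂, by
        rw [biprod.lift_desc, h₁, h₂]
        change (f.hom - g.hom) + (g.hom - h.hom) = f.hom - h.hom; abel⟩
  comp_left := by
    rintro X Y Z f g g' ⟨Wo, hw, p, q, h⟩
    exact ⟨Wo, hw, f.hom ≫ p, q, by
      rw [Category.assoc, h]; change f.hom ≫ (g.hom - g'.hom) = f.hom ≫ g.hom - f.hom ≫ g'.hom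
      rw [Preadditive.comp_sub]⟩
  comp_right := by
    rintro X Y Z f f' g ⟨Wo, hw, p, q, h⟩
    exact ⟨Wo, hw, p, q ≫ g.hom, by
      rw [← Category.assoc, h]; change (f.hom - f'.hom) ≫ g.hom = f.hom ≫ g.hom - f'.hom ≫ g.hom
      rw [Preadditive.sub_comp]⟩

theorem wRel_add (Wp P : B → Prop)
    (hWbi : ∀ {X Y : B}, Wp X → Wp Y → Wp (X ⊞ Y)) :
    ∀ ⦃X Y : ObjectProperty.FullSubcategory P⦄ (f₁ f₂ g₁ g₂ : X ⟶ Y) (_ : wRel Wp P f₁ f₂)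
      (_ : wRel Wp P g₁ g₂), wRel Wp P (f₁ + g₁) (f₂ + g₂) := by
  rintro X Y f₁ f₂ g₁ g₂ ⟨W₁, hw₁, p₁, q₁, h₁⟩ ⟨W₂, hw₂, p₂, q₂, h₂⟩
  exact ⟨W₁ ⊞ W₂, hWbi hw₁ hw₂, biprod.lift p₁ p₂, biprod.desc q₁ q₂, by
    rw [biprod.lift_desc, h₁, h₂]
    change (f₁.hom - f₂.hom) + (g₁.hom - g₂.hom) = (f₁.hom + g₁.hom) - (f₂.hom + g₂.hom); abel⟩

/-- The heart is preadditive. -/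
def heartPreadditive (Wp P : B → Prop) (hW0 : Wp (0 : B))
    (hWbi : ∀ {X Y : B}, Wp X → Wp Y → Wp (X ⊞ Y)) : Preadditive (HeartCat Wp P) :=
  letI := wRel_congruence Wp P hW0 hWbi
  Quotient.preadditive _ (wRel_add Wp P hWbi)

/-- The heart has zero morphisms. -/
def heartZeroMorphisms (Wp P : B → Prop) (hW0 : Wp (0 : B))
    (hWbi : ∀ {X Y : B}, Wp X → Wp Y → Wp (X ⊞ Y)) : HasZeroMorphisms (HeartCat Wp P) :=
  letI := heartPreadditive Wp P hW0 hWbi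
  inferInstance

/-- A full additive subcategory closed under direct summands and isomorphisms. -/
structure IsGoodSubcat (P : B → Prop) : Prop where
  mem_of_iso : ∀ {X Y : B}, (X ≅ Y) → P X → P Y
  zero_mem : P (0 : B)
  biprod_mem : ∀ {X Y : B}, P X → P Y → P (X ⊞ Y)
  summand_mem : ∀ {X Y : B}, P (X ⊞ Y) → P X

/-- `(U, V)` is a cotorsion pair on the extriangulated category `(B, 𝔼, 𝔰)`. -/
structure IsCotorsionPair (T : Extriangulated B) (U V : B → Prop) : Prop where
  subU : IsGoodSubcat U
  subV : IsGoodSubcat V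
  ext_vanish : ∀ {u v : B}, U u → V v → ∀ δ : T.Ext u v, δ = 0
  cone : ∀ X : B, ∃ (v u : B) (f : v ⟶ u) (g : u ⟶ X), V v ∧ U u ∧ T.IsConflation f g
  cocone : ∀ X : B, ∃ (v u : B) (f : X ⟶ v) (g : v ⟶ u), V v ∧ U u ∧ T.IsConflation f g

/-- `((S,Tc),(U,V))` is a twin cotorsion pair: two cotorsion pairs with `𝔼(S, V) = 0`. -/
def IsTwinCotorsionPair (T : Extriangulated B) (S Tc U V : B → Prop) : Prop :=
  IsCotorsionPair T S Tc ∧ IsCotorsionPair T U V ∧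
    ∀ {s v : B}, S s → V v → ∀ δ : T.Ext s v, δ = 0

/-- Projective object of an extriangulated category. -/
def IsProjObj (T : Extriangulated B) (P : B) : Prop :=
  ∀ {A X C : B} (a : A ⟶ X) (b : X ⟶ C), T.IsConflation a b →
    ∀ c : P ⟶ C, ∃ d : P ⟶ X, d ≫ b = c

/-- Injective object of an extriangulated category. -/
def IsInjObj (T : Extriangulated B) (I : B) : Prop :=
  ∀ {A X C : B} (a : A ⟶ X) (b : X ⟶ C), T.IsConflation a b →
    ∀ c : A ⟶ I, ∃ d : X ⟶ I, a ≫ d = c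

/-- `B` has enough projectives. -/
def HasEnoughProj (T : Extriangulated B) : Prop :=
  ∀ C : B, ∃ (A P : B) (f : A ⟶ P) (p : P ⟶ C), IsProjObj T P ∧ T.IsConflation f p

/-- `B` has enough injectives. -/
def HasEnoughInj (T : Extriangulated B) : Prop :=
  ∀ A : B, ∃ (I C : B) (i : A ⟶ I) (p : I ⟶ C), IsInjObj T I ∧ T.IsConflation i p

/-- `W = Tc ∩ U`. -/
def Wpred (Tc U : B → Prop) : B → Prop := fun X => Tc X ∧ U X

/-- `CoCone(P, Q)`: objects `X` with a conflation `X ↣ P' ↠ Q'`, `P' ∈ P`, `Q' ∈ Q`. -/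
def CoConeOf (T : Extriangulated B) (P Q : B → Prop) : B → Prop := fun X =>
  ∃ (p q : B) (f : X ⟶ p) (g : p ⟶ q), P p ∧ Q q ∧ T.IsConflation f g

/-- `Cone(P, Q)`: objects `X` with a conflation `P' ↣ Q' ↠ X`, `P' ∈ P`, `Q' ∈ Q`. -/
def ConeOf (T : Extriangulated B) (P Q : B → Prop) : B → Prop := fun X =>
  ∃ (p q : B) (f : p ⟶ q) (g : q ⟶ X), P p ∧ Q q ∧ T.IsConflation f g

/-- `P * Q`: objects `X` with a conflation `P' ↣ X ↠ Q'`, `P' ∈ P`, `Q' ∈ Q`. -/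
def StarOf (T : Extriangulated B) (P Q : B → Prop) : B → Prop := fun X =>
  ∃ (p q : B) (f : p ⟶ X) (g : X ⟶ q), P p ∧ Q q ∧ T.IsConflation f g

/-- `B⁻ = CoCone(W, S)`. -/
def Bminus (T : Extriangulated B) (S Tc U : B → Prop) : B → Prop :=
  CoConeOf T (Wpred Tc U) S

/-- `B⁺ = Cone(V, W)`. -/
def Bplus (T : Extriangulated B) (Tc U V : B → Prop) : B → Prop :=
  ConeOf T V (Wpred Tc U)

/-- `H = B⁻ ∩ B⁺`, the objects of the heart. -/
def HeartPred (T : Extriangulated B) (S Tc U V : B → Prop) : B → Prop := fun X =>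
  Bminus T S Tc U X ∧ Bplus T Tc U V X

/-- The heart `H̄ = H/[W]` of a twin cotorsion pair. -/
abbrev TwinHeart (T : Extriangulated B) (S Tc U V : B → Prop) :=
  HeartCat (Wpred Tc U) (HeartPred T S Tc U V)

/-- Zero morphisms on the heart of a twin cotorsion pair. -/
def heartZeroOfTwin (T : Extriangulated B) {S Tc U V : B → Prop}
    (h : IsTwinCotorsionPair T S Tc U V) (P : B → Prop) :
    HasZeroMorphisms (HeartCat (Wpred Tc U) P) :=
  heartZeroMorphisms _ _ ⟨h.1.subV.zero_mem, h.2.1.subU.zero_mem⟩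
    (fun hx hy => ⟨h.1.subV.biprod_mem hx.1 hy.1, h.2.1.subU.biprod_mem hx.2 hy.2⟩)

end Hearts


section Helpers

variable {B : Type u} [Category.{v} B] [Preadditive B] [HasZeroObject B]
  [HasBinaryBiproducts B] (T : Extriangulated B)

lemma pull_comp' {C C' C'' A : B} (f : C ⟶ C') (g : C' ⟶ C'') (δ : T.Ext C'' A) :
    T.pull (f ≫ g) δ = T.pull f (T.pull g δ) := by
  simp only [Extriangulated.pull, op_comp, T.E.map_comp, NatTrans.comp_app,
    AddCommGrpCat.coe_comp, Function.comp_apply]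

lemma push_comp' {C A A' A'' : B} (f : A ⟶ A') (g : A' ⟶ A'') (δ : T.Ext C A) :
    T.push (f ≫ g) δ = T.push g (T.push f δ) := by
  simp only [Extriangulated.push, (T.E.obj (op C)).map_comp,
    AddCommGrpCat.coe_comp, Function.comp_apply]

lemma pull_id' {C A : B} (δ : T.Ext C A) : T.pull (𝟙 C) δ = δ := by
  show ((T.E.map ((𝟙 C).op)).app A) δ = δ
  rw [show ((𝟙 C).op) = 𝟙 (op C) from rfl, T.E.map_id]
  rfl

lemma push_id' {C A : B} (δ : T.Ext C A) : T.push (𝟙 A) δ = δ := by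
  show ((T.E.obj (op C)).map (𝟙 A)) δ = δ
  rw [(T.E.obj (op C)).map_id]
  rfl

lemma pull_zero' {C C' A : B} (g : C ⟶ C') : T.pull g (0 : T.Ext C' A) = 0 :=
  map_zero _

lemma push_zero' {C A A' : B} (f : A ⟶ A') : T.push f (0 : T.Ext C A) = 0 :=
  map_zero _

lemma push_pull' {C C' A A' : B} (f : A ⟶ A') (g : C ⟶ C') (δ : T.Ext C' A) :
    T.push f (T.pull g δ) = T.pull g (T.push f δ) := by
  have := congrArg (fun (φ : (T.E.obj (op C')).obj A ⟶ (T.E.obj (op C)).obj A') => φ δ)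
    ((T.E.map g.op).naturality f)
  simp only [AddCommGrpCat.coe_comp, Function.comp_apply] at this
  exact this.symm

end Helpers

section Main

variable {B : Type u} [Category.{v} B] [Preadditive B] [HasZeroObject B]
  [HasBinaryBiproducts B] (T : Extriangulated B)

lemma triangle_facts {A C X₀ : B} (δ : T.Ext C A) (a : A ⟶ X₀) (b : X₀ ⟶ C)
    (h : T.Real δ X₀ a b) : a ≫ b = 0 ∧ T.pull b δ = 0 ∧ T.push a δ = 0 := by
  obtain ⟨h', h1, h2⟩ := T.et3 (0 : T.Ext X₀ A) δ biprod.inl biprod.snd a b (𝟙 A)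
    (biprod.desc a (𝟙 X₀)) (T.real_zero A X₀) h (by simp)
  have hb : h' = b := by
    have := congrArg (fun m => biprod.inr ≫ m) h1
    simpa using this.symm
  have hab : a ≫ b = 0 := by
    have := congrArg (fun m => biprod.inl ≫ m) h1
    simpa [hb] using this
  have hpull : T.pull b δ = 0 := by
    have h2' : T.push (𝟙 A) (0 : T.Ext X₀ A) = T.pull h' δ := h2
    rw [push_zero'] at h2'
    rw [← hb, ← h2']
  refine ⟨hab, hpull, ?_⟩
  obtain ⟨f, hf1, hf2⟩ := T.et3op δ (0 : T.Ext C X₀) a b biprod.inl biprod.snd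
    (biprod.lift (𝟙 X₀) b) (𝟙 C) h (T.real_zero X₀ C) (by simp)
  have hfa : f = a := by
    have := congrArg (fun m => m ≫ biprod.fst) hf1
    simpa using this.symm
  have hf2' : T.push f δ = T.pull (𝟙 C) (0 : T.Ext C X₀) := hf2
  rw [hfa, pull_zero'] at hf2'
  exact hf2'

lemma real_id_zero (Y : B) : T.Real (0 : T.Ext (0 : B) Y) Y (𝟙 Y) 0 := by
  have hi : (biprod.fst : Y ⊞ (0 : B) ⟶ Y) ≫ biprod.inl = 𝟙 (Y ⊞ (0 : B)) := by
    apply biprod.hom_ext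
    · simp
    · apply (isZero_zero B).eq_of_tgt
  have := T.real_iso (0 : T.Ext (0 : B) Y) biprod.inl biprod.snd
    (Iso.mk biprod.fst biprod.inl hi (by simp)) (T.real_zero Y 0)
  have h2 : T.Real (0 : T.Ext (0 : B) Y) Y (biprod.inl ≫ biprod.fst)
      (biprod.inl ≫ biprod.snd) := this
  rw [biprod.inl_fst, biprod.inl_snd] at h2
  exact h2

end Main

/-- Liu–Nakaoka/Nakaoka–Palu: the covariant long exact sequence
`B(Y,A) → B(Y,B) → B(Y,C) → 𝔼(Y,A) → 𝔼(Y,B) → 𝔼(Y,C)`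
associated to an 𝔼-triangle `A ↣ B ↠ C` (exactness at the four middle spots). -/
theorem stmt9 {B : Type u} [Category.{v} B] [Preadditive B] [HasZeroObject B]
    [HasBinaryBiproducts B] (T : Extriangulated B) {A C X₀ : B}
    (δ : T.Ext C A) (a : A ⟶ X₀) (b : X₀ ⟶ C) (h : T.Real δ X₀ a b) (Y : B) :
    (∀ u : Y ⟶ X₀, u ≫ b = 0 ↔ ∃ w : Y ⟶ A, u = w ≫ a) ∧
    (∀ g : Y ⟶ C, T.pull g δ = 0 ↔ ∃ u : Y ⟶ X₀, g = u ≫ b) ∧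
    (∀ ε : T.Ext Y A, T.push a ε = 0 ↔ ∃ g : Y ⟶ C, ε = T.pull g δ) ∧
    (∀ ε : T.Ext Y X₀, T.push b ε = 0 ↔ ∃ ε' : T.Ext Y A, ε = T.push a ε') := by
  obtain ⟨hab, hbδ, haδ⟩ := triangle_facts T δ a b h
  refine ⟨?_, ?_, ?_, ?_⟩
  · intro u
    constructor
    · intro hu
      obtain ⟨f, hf1, _⟩ := T.et3op (0 : T.Ext (0 : B) Y) δ (𝟙 Y) 0 a b u 0
        (real_id_zero T Y) h (by simp [hu])
      exact ⟨f, by simpa using hf1⟩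
    · rintro ⟨w, rfl⟩
      rw [assoc, hab, comp_zero]
  · intro g
    constructor
    · intro hg
      have hr : T.Real (T.pull g δ) (A ⊞ Y) biprod.inl biprod.snd := by
        rw [hg]; exact T.real_zero A Y
      obtain ⟨m, hm1, hm2⟩ := T.real_mor (T.pull g δ) δ (𝟙 A) g biprod.inl biprod.snd
        a b hr h (push_id' T _)
      refine ⟨biprod.inr ≫ m, ?_⟩
      have := congrArg (fun x => biprod.inr ≫ x) hm2
      simpa using this.symm
    · rintro ⟨u, rfl⟩
      rw [pull_comp', hbδ, pull_zero']
  · intro ε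
    constructor
    · intro hε
      obtain ⟨M, s, t, hst⟩ := T.real_ex ε
      have hr : T.Real (T.push a ε) (X₀ ⊞ Y) biprod.inl biprod.snd := by
        rw [hε]; exact T.real_zero X₀ Y
      obtain ⟨m, hm1, hm2⟩ := T.real_mor ε (T.push a ε) a (𝟙 Y) s t biprod.inl biprod.snd
        hst hr (pull_id' T _).symm
      obtain ⟨hC, hc1, hc2⟩ := T.et3 ε δ s t a b (𝟙 A) (m ≫ biprod.fst) hst h
        (by rw [← assoc, hm1]; simp)
      refine ⟨hC, ?_⟩
      have hc2' : T.push (𝟙 A) ε = T.pull hC δ := hc2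
      rwa [push_id'] at hc2'
    · rintro ⟨g, rfl⟩
      rw [push_pull', haδ, pull_zero']
  · intro ε
    constructor
    · intro hε
      obtain ⟨M, s, t, hst⟩ := T.real_ex ε
      obtain ⟨E₀, c', δ'', d, e, h1, h2, h3, h4, h5, h6⟩ := T.et4 δ ε a b s t h hst
      rw [show T.push b ε = ((T.E.obj (op Y)).map b) ε from rfl] at hε
      rw [hε] at h2
      obtain ⟨i, hi1, hi2⟩ := T.real_unique (0 : T.Ext Y C) d e biprod.inl biprod.snd
        h2 (T.real_zero C Y)
      refine ⟨T.pull (biprod.inr ≫ i.inv) δ'', ?_⟩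
      have hje : (biprod.inr ≫ i.inv) ≫ e = 𝟙 Y := by
        rw [← hi2]; simp
      rw [push_pull', show T.push a δ'' = T.pull e ε from h6, ← pull_comp', hje, pull_id']
    · rintro ⟨ε', rfl⟩
      rw [← push_comp', hab]
      haveI := T.addE₁ (op Y)
      show ((T.E.obj (op Y)).map (0 : A ⟶ C)) ε' = 0
      rw [Functor.map_zero]
      rfl
end ExtStmt
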